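/- Let η ∈ ℕ^N and define ν_I := c_I(η) for nonempty I ⊆ {1,...,N}, where with I = {t_1 < ... < t_s}: (c_I(η))_{t_j} = η_{t_{j+1}} for j < s, (c_I(η))_{t_s} = η_{t_1}+1, and (c_I(η))_i = η_i for i ∉ I. If I and I' are both maximal with respect to η (i.e. η_j ≠ η_{t_u} for t_{u−1} < j < t_u, u = 1,...,s with t_0 := 0, and η_j ≠ η_{t_1}+1 for t_s < j ≤ N) and c_I(η) = c_{I'}(η), then I = I'. -/
import Mathlib

/-- The composition `c_I(η)`. -/
def cI {N : ℕ} (η : Fin N → ℕ) (I : Finset (Fin N)) : Fin N → ℕ := fun i =>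
  if hi : i ∈ I then
    if h : (I.filter fun j => i < j).Nonempty
    then η ((I.filter fun j => i < j).min' h)
    else η (I.min' ⟨i, hi⟩) + 1
  else η i

/-- `I = {t_1 < … < t_s}` is maximal with respect to `η`:
`η_j ≠ η_{t_u}` for `t_{u-1} < j < t_u` and `η_j ≠ η_{t_1} + 1` for `j > t_s`. -/
def MaximalWrt {N : ℕ} (η : Fin N → ℕ) (I : Finset (Fin N)) : Prop :=
  I.Nonempty ∧ ∀ j : Fin N, j ∉ I →
    if h : (I.filter fun t => j < t).Nonempty
    then η j ≠ η ((I.filter fun t => j < t).min' h)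
    else ∀ hI : I.Nonempty, η j ≠ η (I.min' hI) + 1

/-- The "next element" map: cyclic successor on `I`, identity off `I`. -/
def nxt {N : ℕ} (I : Finset (Fin N)) (i : Fin N) : Fin N :=
  if hi : i ∈ I then
    if h : (I.filter fun j => i < j).Nonempty then (I.filter fun j => i < j).min' h
    else if h2 : I.Nonempty then I.min' h2 else i
  else i

lemma nxt_mem {N : ℕ} {I : Finset (Fin N)} {i : Fin N} (hi : i ∈ I) : nxt I i ∈ I := by
  unfold nxt
  rw [dif_pos hi]
  split
  · exact Finset.mem_of_mem_filter _ (Finset.min'_mem _ _)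
  · rw [dif_pos ⟨i, hi⟩]; exact Finset.min'_mem _ _

lemma filter_nonempty_of_ne_max {N : ℕ} {I : Finset (Fin N)} (hne : I.Nonempty)
    {i : Fin N} (hi : i ∈ I) (hit : i ≠ I.max' hne) :
    (I.filter fun j => i < j).Nonempty :=
  ⟨I.max' hne, Finset.mem_filter.mpr ⟨I.max'_mem hne,
    lt_of_le_of_ne (Finset.le_max' I i hi) hit⟩⟩

lemma filter_max_empty {N : ℕ} {I : Finset (Fin N)} (hne : I.Nonempty) :
    ¬ (I.filter fun j => I.max' hne < j).Nonempty := by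
  rintro ⟨j, hj⟩
  rw [Finset.mem_filter] at hj
  exact absurd hj.2 (not_lt.mpr (Finset.le_max' I j hj.1))

lemma nxt_inj {N : ℕ} (I : Finset (Fin N)) : Function.Injective (nxt I) := by
  have hmono : ∀ i j : Fin N, i ∈ I → j ∈ I → i < j → nxt I i ≠ nxt I j := by
    intro i j hi hj hij
    have hne : I.Nonempty := ⟨i, hi⟩
    have hfi : (I.filter fun k => i < k).Nonempty := ⟨j, Finset.mem_filter.mpr ⟨hj, hij⟩⟩
    have hni : nxt I i = (I.filter fun k => i < k).min' hfi := by
      unfold nxt; rw [dif_pos hi, dif_pos hfi]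
    have h1 : i < nxt I i := by
      rw [hni]
      have := Finset.min'_mem (I.filter fun k => i < k) hfi
      exact (Finset.mem_filter.mp this).2
    have h2 : nxt I i ≤ j := by
      rw [hni]
      exact Finset.min'_le _ j (Finset.mem_filter.mpr ⟨hj, hij⟩)
    by_cases hfj : (I.filter fun k => j < k).Nonempty
    · have hnj : nxt I j = (I.filter fun k => j < k).min' hfj := by
        unfold nxt; rw [dif_pos hj, dif_pos hfj]
      have h3 : j < nxt I j := by
        rw [hnj]
        have := Finset.min'_mem (I.filter fun k => j < k) hfj
        exact (Finset.mem_filter.mp this).2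
      exact ne_of_lt (lt_of_le_of_lt h2 h3)
    · have hnj : nxt I j = I.min' hne := by
        unfold nxt; rw [dif_pos hj, dif_neg hfj, dif_pos hne]
      have : nxt I j ≤ i := hnj ▸ Finset.min'_le _ i hi
      exact (ne_of_lt (lt_of_le_of_lt this h1)).symm
  intro i j hij
  by_contra hne
  by_cases hi : i ∈ I <;> by_cases hj : j ∈ I
  · rcases lt_trichotomy i j with h | h | h
    · exact hmono i j hi hj h hij
    · exact hne h
    · exact hmono j i hj hi h hij.symm
  · have : nxt I j = j := by unfold nxt; rw [dif_neg hj]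
    exact hj (this ▸ hij ▸ nxt_mem hi)
  · have : nxt I i = i := by unfold nxt; rw [dif_neg hi]
    exact hi (this ▸ hij.symm ▸ nxt_mem hj)
  · have h1 : nxt I i = i := by unfold nxt; rw [dif_neg hi]
    have h2 : nxt I j = j := by unfold nxt; rw [dif_neg hj]
    exact hne (h1 ▸ h2 ▸ hij)

lemma cI_eq_nxt {N : ℕ} (η : Fin N → ℕ) {I : Finset (Fin N)} (hne : I.Nonempty)
    {i : Fin N} (hit : i ≠ I.max' hne) : cI η I i = η (nxt I i) := by
  by_cases hi : i ∈ I
  · have hf := filter_nonempty_of_ne_max hne hi hit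
    unfold cI nxt
    rw [dif_pos hi, dif_pos hf, dif_pos hi, dif_pos hf]
  · unfold cI nxt; rw [dif_neg hi, dif_neg hi]

lemma cI_max {N : ℕ} (η : Fin N → ℕ) {I : Finset (Fin N)} (hne : I.Nonempty) :
    cI η I (I.max' hne) = η (I.min' hne) + 1 := by
  unfold cI
  rw [dif_pos (I.max'_mem hne), dif_neg (filter_max_empty hne)]

lemma nxt_max {N : ℕ} {I : Finset (Fin N)} (hne : I.Nonempty) :
    nxt I (I.max' hne) = I.min' hne := by
  unfold nxt
  rw [dif_pos (I.max'_mem hne), dif_neg (filter_max_empty hne), dif_pos hne]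

lemma map_nxt_univ {N : ℕ} (I : Finset (Fin N)) :
    Multiset.map (nxt I) Finset.univ.val = Finset.univ.val := by
  have hbij : Function.Bijective (nxt I) :=
    Finite.injective_iff_bijective.mp (nxt_inj I)
  let e := Equiv.ofBijective _ hbij
  have h : Finset.univ.map e.toEmbedding = Finset.univ := Finset.map_univ_equiv e
  calc Multiset.map (nxt I) Finset.univ.val
      = (Finset.univ.map e.toEmbedding).val := rfl
    _ = Finset.univ.val := by rw [h]

lemma map_cI_univ {N : ℕ} (η : Fin N → ℕ) {I : Finset (Fin N)} (hne : I.Nonempty) :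
    Multiset.map (cI η I) Finset.univ.val =
      (η (I.min' hne) + 1) ::ₘ (Multiset.map η Finset.univ.val).erase (η (I.min' hne)) := by
  set t := I.max' hne with ht
  have htu : t ∈ (Finset.univ : Finset (Fin N)).val := Finset.mem_univ_val t
  have hsplit : (Finset.univ : Finset (Fin N)).val = t ::ₘ (Finset.univ.val).erase t :=
    (Multiset.cons_erase htu).symm
  have hcongr : Multiset.map (cI η I) ((Finset.univ.val).erase t)
      = Multiset.map (η ∘ nxt I) ((Finset.univ.val).erase t) := by
    apply Multiset.map_congr rfl
    intro x hx
    have hxt : x ≠ t := (Multiset.Nodup.mem_erase_iff Finset.univ.nodup).mp hx |>.1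
    exact cI_eq_nxt η hne hxt
  have hη : Multiset.map η Finset.univ.val
      = η (I.min' hne) ::ₘ Multiset.map (η ∘ nxt I) ((Finset.univ.val).erase t) := by
    calc Multiset.map η Finset.univ.val
        = Multiset.map η (Multiset.map (nxt I) Finset.univ.val) := by rw [map_nxt_univ]
      _ = Multiset.map (η ∘ nxt I) Finset.univ.val := by rw [Multiset.map_map]
      _ = Multiset.map (η ∘ nxt I) (t ::ₘ (Finset.univ.val).erase t) := by rw [← hsplit]
      _ = (η ∘ nxt I) t ::ₘ Multiset.map (η ∘ nxt I) ((Finset.univ.val).erase t) := by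
            rw [Multiset.map_cons]
      _ = η (I.min' hne) ::ₘ Multiset.map (η ∘ nxt I) ((Finset.univ.val).erase t) := by
            rw [Function.comp_apply, nxt_max hne]
  have herase : (Multiset.map η Finset.univ.val).erase (η (I.min' hne))
      = Multiset.map (η ∘ nxt I) ((Finset.univ.val).erase t) := by
    rw [hη, Multiset.erase_cons_head]
  calc Multiset.map (cI η I) Finset.univ.val
      = Multiset.map (cI η I) (t ::ₘ (Finset.univ.val).erase t) := by rw [← hsplit]
    _ = cI η I t ::ₘ Multiset.map (cI η I) ((Finset.univ.val).erase t) := by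
          rw [Multiset.map_cons]
    _ = (η (I.min' hne) + 1) ::ₘ Multiset.map (η ∘ nxt I) ((Finset.univ.val).erase t) := by
          rw [cI_max η hne, hcongr]
    _ = (η (I.min' hne) + 1) ::ₘ (Multiset.map η Finset.univ.val).erase (η (I.min' hne)) := by
          rw [herase]

lemma minval_eq {N : ℕ} (η : Fin N → ℕ) (I I' : Finset (Fin N))
    (hne : I.Nonempty) (hne' : I'.Nonempty) (hc : cI η I = cI η I') :
    η (I.min' hne) = η (I'.min' hne') := by
  set a := η (I.min' hne) with ha
  set a' := η (I'.min' hne') with ha'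
  by_contra hne_a
  have h1 := map_cI_univ η hne
  have h2 := map_cI_univ η hne'
  rw [hc] at h1
  have heq : (a + 1) ::ₘ (Multiset.map η Finset.univ.val).erase a
      = (a' + 1) ::ₘ (Multiset.map η Finset.univ.val).erase a' := h1.symm.trans h2
  set M := Multiset.map η Finset.univ.val with hM
  have haM : a ∈ M := Multiset.mem_map_of_mem η (Finset.mem_univ_val _)
  have hcount : 1 ≤ Multiset.count a M := Multiset.one_le_count_iff_mem.mpr haM
  have hL : Multiset.count a ((a + 1) ::ₘ M.erase a) = Multiset.count a M - 1 := by
    rw [Multiset.count_cons_of_ne (by omega), Multiset.count_erase_self]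
  have hR : Multiset.count a ((a' + 1) ::ₘ M.erase a')
      = (if a = a' + 1 then 1 else 0) + Multiset.count a M := by
    rw [Multiset.count_cons, Multiset.count_erase_of_ne hne_a]
    ring
  rw [heq, hR] at hL
  by_cases h : a = a' + 1 <;> simp [h] at hL <;> omega

lemma key_lemma {N : ℕ} (η : Fin N → ℕ) (I I' : Finset (Fin N))
    (hI : MaximalWrt η I) (hne' : I'.Nonempty) (hc : cI η I = cI η I')
    (hval : η (I.min' hI.1) = η (I'.min' hne')) (m : Fin N)
    (hmI : m ∉ I) (hmI' : m ∈ I')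
    (hagree : (I.filter fun j => m < j) = (I'.filter fun j => m < j)) : False := by
  have h1 : cI η I m = η m := by unfold cI; rw [dif_neg hmI]
  have h2 : cI η I m = cI η I' m := congrFun hc m
  have h3 := hI.2 m hmI
  rw [hagree] at h3
  by_cases hf : (I'.filter fun j => m < j).Nonempty
  · rw [dif_pos hf] at h3
    have : cI η I' m = η ((I'.filter fun j => m < j).min' hf) := by
      unfold cI; rw [dif_pos hmI', dif_pos hf]
    rw [h1, this] at h2
    exact h3 h2
  · rw [dif_neg hf] at h3
    have : cI η I' m = η (I'.min' hne') + 1 := by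
      unfold cI; rw [dif_pos hmI', dif_neg hf]
    rw [h1, this] at h2
    exact h3 hI.1 (hval ▸ h2)

theorem stmt_18 (N : ℕ) (η : Fin N → ℕ) (I I' : Finset (Fin N))
    (hI : MaximalWrt η I) (hI' : MaximalWrt η I') (hc : cI η I = cI η I') :
    I = I' := by
  by_contra hne
  have hval := minval_eq η I I' hI.1 hI'.1 hc
  set D := (I \ I') ∪ (I' \ I) with hD
  have hDne : D.Nonempty := by
    rw [Finset.nonempty_iff_ne_empty]
    intro h
    apply hne
    ext j
    constructor <;> intro hj <;> by_contra hj'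
    · have hjD : j ∈ D := Finset.mem_union_left _ (Finset.mem_sdiff.mpr ⟨hj, hj'⟩)
      rw [h] at hjD
      exact absurd hjD (Finset.notMem_empty j)
    · have hjD : j ∈ D := Finset.mem_union_right _ (Finset.mem_sdiff.mpr ⟨hj, hj'⟩)
      rw [h] at hjD
      exact absurd hjD (Finset.notMem_empty j)
  set m := D.max' hDne with hm
  have hmD : m ∈ D := D.max'_mem hDne
  have hagree : (I.filter fun j => m < j) = (I'.filter fun j => m < j) := by
    ext j
    simp only [Finset.mem_filter]
    constructor <;> rintro ⟨hj, hlt⟩ <;> refine ⟨?_, hlt⟩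
    · by_contra hj'
      have hjD : j ∈ D := Finset.mem_union_left _ (Finset.mem_sdiff.mpr ⟨hj, hj'⟩)
      exact absurd hlt (not_lt.mpr (Finset.le_max' D j hjD))
    · by_contra hj'
      have hjD : j ∈ D := Finset.mem_union_right _ (Finset.mem_sdiff.mpr ⟨hj, hj'⟩)
      exact absurd hlt (not_lt.mpr (Finset.le_max' D j hjD))
  rcases Finset.mem_union.mp hmD with h | h
  · obtain ⟨hmI, hmI'⟩ := Finset.mem_sdiff.mp h
    exact key_lemma η I' I hI' hI.1 hc.symm hval.symm m hmI' hmI hagree.symm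
  · obtain ⟨hmI', hmI⟩ := Finset.mem_sdiff.mp h
    exact key_lemma η I I' hI hI'.1 hc hval m hmI hmI' hagree
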